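/- Let k be a commutative field and K = k((t)) the field of formal Laurent series over k. Then every element of K that is algebraic over k lies in k; that is, k((t))/k is a regular extension. -/

import Mathlib

/-- The composite `k → k⟦X⟧ → k((X))` is the canonical map `k → k((X))`. -/
theorem laurentSeries_algebraMap_comp (k : Type*) [Field k] :
    (algebraMap (PowerSeries k) (LaurentSeries k)).comp (algebraMap k (PowerSeries k))
      = algebraMap k (LaurentSeries k) := rfl

/-- The field of formal Laurent series `k((t))` is a regular extension of `k` : every
Laurent series that is algebraic over `k` is a constant, i.e. lies in (the image of) `k`. -/
theorem laurentSeries_regular (k : Type*) [Field k] :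
    ∀ x : LaurentSeries k, IsAlgebraic k x →
      x ∈ (algebraMap k (LaurentSeries k)).range := by
  intro x hx
  have hcomp := laurentSeries_algebraMap_comp k
  -- x is integral over k, hence over k⟦X⟧, hence is (the image of) a power series
  have hint : IsIntegral k x := hx.isIntegral
  have hint' : IsIntegral (PowerSeries k) x := by
    obtain ⟨p, hpmonic, hpeval⟩ := hint
    refine ⟨p.map (algebraMap k (PowerSeries k)), hpmonic.map _, ?_⟩
    rwa [Polynomial.eval₂_map, hcomp]
  obtain ⟨y, hy⟩ := IsIntegrallyClosed.isIntegral_iff.mp hint'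
  set c : k := PowerSeries.constantCoeff (R := k) y with hc
  refine ⟨c, ?_⟩
  have hCc : algebraMap (PowerSeries k) (LaurentSeries k) (PowerSeries.C (R := k) c)
      = algebraMap k (LaurentSeries k) c := by
    rw [← hcomp]; rfl
  have hinj : Function.Injective (algebraMap (PowerSeries k) (LaurentSeries k)) :=
    IsFractionRing.injective _ _
  have hzero : y - PowerSeries.C (R := k) c = 0 := by
    by_contra hz
    set z : PowerSeries k := y - PowerSeries.C (R := k) c with hzdef
    set Z : LaurentSeries k := algebraMap (PowerSeries k) (LaurentSeries k) z with hZ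
    have hZne : Z ≠ 0 := by
      intro h
      exact hz (hinj (by rw [map_zero]; exact h))
    have hintZ : IsIntegral k Z := by
      have : Z = x - algebraMap k (LaurentSeries k) c := by
        rw [hZ, hzdef, map_sub, hy, hCc]
      rw [this]
      exact hint.sub isIntegral_algebraMap
    have h0 : Polynomial.coeff (minpoly k Z) 0 ≠ 0 :=
      minpoly.coeff_zero_ne_zero hintZ hZne
    -- evaluate the minimal polynomial at z inside k⟦X⟧
    have haev : Polynomial.eval₂ (algebraMap k (PowerSeries k)) z (minpoly k Z) = 0 := by
      apply hinj
      rw [map_zero, Polynomial.hom_eval₂, hcomp, ← hZ]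
      exact minpoly.aeval k Z
    -- apply the constant-coefficient map
    have hcz : PowerSeries.constantCoeff (R := k) z = 0 := by
      simp [hzdef, hc]
    have hfinal : Polynomial.coeff (minpoly k Z) 0 = 0 := by
      have hcc := congrArg (PowerSeries.constantCoeff (R := k)) haev
      rw [map_zero, Polynomial.hom_eval₂] at hcc
      have hcomp' : (PowerSeries.constantCoeff (R := k)).comp (algebraMap k (PowerSeries k))
          = RingHom.id k := by
        ext a
        simp [PowerSeries.algebraMap_apply]
      rw [hcomp', hcz] at hcc
      simpa [Polynomial.eval₂_at_zero] using hcc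
    exact h0 hfinal
  have hyC : y = PowerSeries.C (R := k) c := by
    have := sub_eq_zero.mp hzero
    exact this
  rw [← hy, hyC, hCc]
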